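/- arXiv:1304.1724 — 2 statements merged into one kernel-verified Lean document; each statement's English description precedes it below -/
import Mathlib

section
/- Let Σ ⊂ ℝⁿ be a nonempty open convex cone and let w be a positive, twice continuously differentiable function on Σ which is positively homogeneous of degree α > 0. Then w^{1/α} is concave in Σ if and only if for every x ∈ Σ the symmetric n×n matrix α ∇²(log w)(x) + ∇(log w)(x) ⊗ ∇(log w)(x) is negative semidefinite (equivalently, the Bakry–Émery tensor −∇² log w^{1/α} − ∇ log w^{1/α} ⊗ ∇ log w^{1/α} is positive semidefinite, i.e., the curvature-dimension condition CD(0, n+α) holds for Σ with reference measure w(x)dx). -/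
open Set
open scoped RealInnerProductSpace

section Helpers

variable {E : Type*} [NormedAddCommGroup E] [NormedSpace ℝ E]

/-- derivative of a C² function along a line: first derivative. -/
theorem hasDerivAt_line1 {f : E → ℝ} {s : Set E} (hs : IsOpen s) (hf : ContDiffOn ℝ 2 f s)
    (x v : E) {t : ℝ} (ht : x + t • v ∈ s) :
    HasDerivAt (fun r => f (x + r • v)) (fderiv ℝ f (x + t • v) v) t := by
  have hd : DifferentiableAt ℝ f (x + t • v) :=
    (hf.contDiffAt (hs.mem_nhds ht)).differentiableAt two_ne_zero
  have hline : HasDerivAt (fun r : ℝ => x + r • v) v t := by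
    simpa using ((hasDerivAt_id t).smul_const v).const_add x
  exact hd.hasFDerivAt.comp_hasDerivAt t hline

/-- derivative of a C² function along a line: second derivative. -/
theorem hasDerivAt_line2 {f : E → ℝ} {s : Set E} (hs : IsOpen s) (hf : ContDiffOn ℝ 2 f s)
    (x v : E) {t : ℝ} (ht : x + t • v ∈ s) :
    HasDerivAt (fun r => fderiv ℝ f (x + r • v) v)
      (iteratedFDeriv ℝ 2 f (x + t • v) ![v, v]) t := by
  have h2 : ContDiffAt ℝ 2 f (x + t • v) := hf.contDiffAt (hs.mem_nhds ht)
  have hd : DifferentiableAt ℝ (fderiv ℝ f) (x + t • v) :=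
    (h2.fderiv_right (m := 1) (by norm_num)).differentiableAt one_ne_zero
  have hline : HasDerivAt (fun r : ℝ => x + r • v) v t := by
    simpa using ((hasDerivAt_id t).smul_const v).const_add x
  have hcomp : HasDerivAt (fun r : ℝ => fderiv ℝ f (x + r • v))
      (fderiv ℝ (fderiv ℝ f) (x + t • v) v) t :=
    hd.hasFDerivAt.comp_hasDerivAt t hline
  have := hcomp.clm_apply (hasDerivAt_const t v)
  rw [iteratedFDeriv_two_apply]
  simpa using this

/-- A C² function on an open convex set is concave iff its second derivative in every
direction is nonpositive. -/
theorem concaveOn_iff_snd_nonpos {s : Set E} (hs : IsOpen s) (hc : Convex ℝ s)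
    {f : E → ℝ} (hf : ContDiffOn ℝ 2 f s) :
    ConcaveOn ℝ s f ↔ ∀ x ∈ s, ∀ v : E, iteratedFDeriv ℝ 2 f x ![v, v] ≤ 0 := by
  constructor
  · intro h x hx v
    set D : Set ℝ := {t : ℝ | x + t • v ∈ s} with hD
    have hDopen : IsOpen D := hs.preimage (by fun_prop)
    have h0 : (0 : ℝ) ∈ D := by simp [hD, hx]
    set g : ℝ → ℝ := fun t => f (x + t • v) with hg
    have hA : ∀ t : ℝ, (AffineMap.lineMap x (x + v) : ℝ →ᵃ[ℝ] E) t = x + t • v := by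
      intro t
      simp [AffineMap.lineMap_apply]
      abel
    have hconc : ConcaveOn ℝ D g := by
      have hcmp := h.comp_affineMap (AffineMap.lineMap x (x + v) : ℝ →ᵃ[ℝ] E)
      have hset : (AffineMap.lineMap x (x + v) : ℝ →ᵃ[ℝ] E) ⁻¹' s = D := by
        ext t; simp [hD, hA t]
      have hfun : (f ∘ (AffineMap.lineMap x (x + v) : ℝ →ᵃ[ℝ] E)) = g := by
        funext t; simp [hg, Function.comp, hA t]
      rwa [hset, hfun] at hcmp
    set G : ℝ → ℝ := fun t => fderiv ℝ f (x + t • v) v with hGdef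
    have hG : ∀ t ∈ D, HasDerivAt g (G t) t := fun t ht => hasDerivAt_line1 hs hf x v ht
    have hG2 : HasDerivAt G (iteratedFDeriv ℝ 2 f x ![v, v]) 0 := by
      have := hasDerivAt_line2 hs hf x v (t := 0) (by simpa using hx)
      simpa using this
    have hneg : ConvexOn ℝ D (-g) := hconc.neg
    -- G is antitone, hence its derivative at 0 is ≤ 0
    have hanti : ∀ t ∈ D, 0 < t → G t ≤ G 0 := by
      intro t ht htpos
      have h1 : -G 0 ≤ slope (-g) 0 t :=
        hneg.le_slope_of_hasDerivAt h0 ht htpos (hG 0 h0).neg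
      have h2 : slope (-g) 0 t ≤ -G t :=
        hneg.slope_le_of_hasDerivAt h0 ht htpos (hG t ht).neg
      linarith
    have htend : Filter.Tendsto (slope G 0) (nhdsWithin 0 (Ioi 0)) (nhds
        (iteratedFDeriv ℝ 2 f x ![v, v])) := by
      have := hasDerivAt_iff_tendsto_slope.mp hG2
      exact this.mono_left (nhdsWithin_mono 0 (fun t htt => ne_of_gt htt))
    refine le_of_tendsto htend ?_
    have hDmem : D ∈ nhdsWithin (0 : ℝ) (Ioi 0) :=
      nhdsWithin_le_nhds (hDopen.mem_nhds h0)
    filter_upwards [hDmem, self_mem_nhdsWithin] with t ht htpos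
    rw [slope_def_field]
    have := hanti t ht htpos
    have ht0 : (0 : ℝ) < t - 0 := by simpa using htpos
    apply div_nonpos_of_nonpos_of_nonneg <;> simp_all <;> linarith
  · intro h
    refine ⟨hc, ?_⟩
    intro x hx y hy a b ha hb hab
    set v : E := y - x with hv
    set D : Set ℝ := {t : ℝ | x + t • v ∈ s} with hD
    have hDopen : IsOpen D := hs.preimage (by fun_prop)
    have hDconv : Convex ℝ D := by
      have hA : ∀ t : ℝ, (AffineMap.lineMap x (x + v) : ℝ →ᵃ[ℝ] E) t = x + t • v := by
        intro t; simp [AffineMap.lineMap_apply]; abel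
      have := hc.affine_preimage (AffineMap.lineMap x (x + v) : ℝ →ᵃ[ℝ] E)
      have hset : (AffineMap.lineMap x (x + v) : ℝ →ᵃ[ℝ] E) ⁻¹' s = D := by
        ext t; simp [hD, hA t]
      rwa [hset] at this
    set g : ℝ → ℝ := fun t => f (x + t • v) with hg
    set G : ℝ → ℝ := fun t => fderiv ℝ f (x + t • v) v with hGdef
    have hG : ∀ t ∈ D, HasDerivAt g (G t) t := fun t ht => hasDerivAt_line1 hs hf x v ht
    have hG2 : ∀ t ∈ D, HasDerivAt G (iteratedFDeriv ℝ 2 f (x + t • v) ![v, v]) t :=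
      fun t ht => hasDerivAt_line2 hs hf x v ht
    have hint : interior D = D := hDopen.interior_eq
    have hgc : ConcaveOn ℝ D g := by
      refine concaveOn_of_hasDerivWithinAt2_nonpos hDconv
        (f' := G) (f'' := fun t => iteratedFDeriv ℝ 2 f (x + t • v) ![v, v])
        (fun t ht => (hG t ht).continuousAt.continuousWithinAt) ?_ ?_ ?_
      · intro t ht; rw [hint] at ht ⊢; exact (hG t ht).hasDerivWithinAt
      · intro t ht; rw [hint] at ht ⊢; exact (hG2 t ht).hasDerivWithinAt
      · intro t ht; rw [hint] at ht; exact h _ ht v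
    have h0 : (0 : ℝ) ∈ D := by simp [hD, hx]
    have h1 : (1 : ℝ) ∈ D := by simp [hD, hv, hy]
    have hcomb := hgc.2 h0 h1 ha hb hab
    have hpt : a • x + b • y = x + (a • (0:ℝ) + b • 1) • v := by
      have hab' : a = 1 - b := by linarith
      simp only [hv, hab', smul_eq_mul]
      module
    have hg0 : g 0 = f x := by simp [hg]
    have hg1 : g 1 = f y := by simp [hg, hv]
    rw [hg0, hg1] at hcomb
    rw [hpt]
    exact hcomb

end Helpers

/-- For a positive `C²` weight `w` on a nonempty open convex cone `S ⊆ ℝⁿ`, positively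
homogeneous of degree `α > 0`, the concavity of `w^{1/α}` in `S` is equivalent to the
negative semidefiniteness of `α ∇²(log w) + ∇(log w) ⊗ ∇(log w)` at every point of `S`
(i.e. to the curvature-dimension condition `CD(0, n+α)`, the nonnegativity of the
Bakry–Émery tensor `-∇² log w^{1/α} - ∇ log w^{1/α} ⊗ ∇ log w^{1/α}`). -/
theorem concave_iff_curvature_dimension {n : ℕ}
    (S : Set (EuclideanSpace ℝ (Fin n))) (hSopen : IsOpen S) (hSne : S.Nonempty)
    (hSconv : Convex ℝ S) (hScone : ∀ x ∈ S, ∀ t : ℝ, 0 < t → t • x ∈ S)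
    (α : ℝ) (hα : 0 < α)
    (w : EuclideanSpace ℝ (Fin n) → ℝ)
    (hwpos : ∀ x ∈ S, 0 < w x)
    (hwC2 : ContDiffOn ℝ 2 w S)
    (hwhom : ∀ t : ℝ, 0 < t → ∀ x ∈ S, w (t • x) = t ^ α * w x) :
    (ConcaveOn ℝ S fun x => w x ^ (1 / α)) ↔
      ∀ x ∈ S, ∀ v : EuclideanSpace ℝ (Fin n),
        α * iteratedFDeriv ℝ 2 (fun y => Real.log (w y)) x ![v, v] +
          (⟪gradient (fun y => Real.log (w y)) x, v⟫) ^ 2 ≤ 0 := by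
  have hwne : ∀ x ∈ S, w x ≠ 0 := fun x hx => (hwpos x hx).ne'
  have huC2 : ContDiffOn ℝ 2 (fun x => w x ^ (1 / α)) S :=
    hwC2.rpow_const_of_ne hwne
  have hlC2 : ContDiffOn ℝ 2 (fun y => Real.log (w y)) S := hwC2.log hwne
  rw [concaveOn_iff_snd_nonpos hSopen hSconv huC2]
  refine forall_congr' fun x => forall_congr' fun hx => forall_congr' fun v => ?_
  have hwx : 0 < w x := hwpos x hx
  set d : ℝ := fderiv ℝ w x v with hd
  set W2 : ℝ := iteratedFDeriv ℝ 2 w x ![v, v] with hW2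
  have hwdiff : ∀ y ∈ S, DifferentiableAt ℝ w y := fun y hy =>
    (hwC2.contDiffAt (hSopen.mem_nhds hy)).differentiableAt two_ne_zero
  -- gradient term
  have hgrad : ⟪gradient (fun y => Real.log (w y)) x, v⟫ = d / w x := by
    have hfd : HasFDerivAt (fun y => Real.log (w y)) ((w x)⁻¹ • fderiv ℝ w x) x :=
      ((hwdiff x hx).hasFDerivAt).log hwx.ne'
    have := hfd.hasGradientAt.gradient
    rw [this, InnerProductSpace.toDual_symm_apply]
    simp [hd, div_eq_inv_mul]
  -- second derivative of log w
  have hlogfd : ∀ y ∈ S, fderiv ℝ (fun z => Real.log (w z)) y = (w y)⁻¹ • fderiv ℝ w y :=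
    fun y hy => (((hwdiff y hy).hasFDerivAt).log (hwne y hy)).fderiv
  have hDmem : {t : ℝ | x + t • v ∈ S} ∈ nhds (0 : ℝ) := by
    have : IsOpen {t : ℝ | x + t • v ∈ S} := hSopen.preimage (by fun_prop)
    exact this.mem_nhds (by simp [hx])
  have hlog2 : iteratedFDeriv ℝ 2 (fun y => Real.log (w y)) x ![v, v]
      = (W2 * w x - d * d) / (w x) ^ 2 := by
    have hF1 : HasDerivAt (fun t : ℝ => fderiv ℝ (fun z => Real.log (w z)) (x + t • v) v)
        (iteratedFDeriv ℝ 2 (fun y => Real.log (w y)) x ![v, v]) 0 := by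
      have := hasDerivAt_line2 hSopen hlC2 x v (t := 0) (by simpa using hx)
      simpa using this
    have hnum : HasDerivAt (fun t : ℝ => fderiv ℝ w (x + t • v) v) W2 0 := by
      have := hasDerivAt_line2 hSopen hwC2 x v (t := 0) (by simpa using hx)
      simpa using this
    have hden : HasDerivAt (fun t : ℝ => w (x + t • v)) d 0 := by
      have := hasDerivAt_line1 hSopen hwC2 x v (t := 0) (by simpa using hx)
      simpa using this
    have hF2 : HasDerivAt (fun t : ℝ => fderiv ℝ w (x + t • v) v / w (x + t • v))
        ((W2 * w x - d * d) / (w x) ^ 2) 0 := by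
      have := hnum.div hden (by simpa using hwx.ne')
      simp only [zero_smul, add_zero] at this
      exact this
    have heq : (fun t : ℝ => fderiv ℝ (fun z => Real.log (w z)) (x + t • v) v)
        =ᶠ[nhds (0:ℝ)] (fun t : ℝ => fderiv ℝ w (x + t • v) v / w (x + t • v)) := by
      filter_upwards [hDmem] with t ht
      rw [hlogfd _ ht]
      simp [div_eq_inv_mul]
    exact (hF1.congr_of_eventuallyEq heq.symm).unique hF2
  -- second derivative of u = w ^ (1/α)
  have hufd : ∀ y ∈ S, fderiv ℝ (fun z => w z ^ (1 / α)) y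
      = ((1 / α) * w y ^ (1 / α - 1)) • fderiv ℝ w y := fun y hy =>
    (((hwdiff y hy).hasFDerivAt).rpow_const (Or.inl (hwne y hy))).fderiv
  have hu2 : iteratedFDeriv ℝ 2 (fun z => w z ^ (1 / α)) x ![v, v]
      = (1 / α) * ((1 / α - 1) * w x ^ (1 / α - 2) * d) * d
        + (1 / α) * w x ^ (1 / α - 1) * W2 := by
    have hF3 : HasDerivAt (fun t : ℝ => fderiv ℝ (fun z => w z ^ (1 / α)) (x + t • v) v)
        (iteratedFDeriv ℝ 2 (fun z => w z ^ (1 / α)) x ![v, v]) 0 := by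
      have := hasDerivAt_line2 hSopen huC2 x v (t := 0) (by simpa using hx)
      simpa using this
    have hnum : HasDerivAt (fun t : ℝ => fderiv ℝ w (x + t • v) v) W2 0 := by
      have := hasDerivAt_line2 hSopen hwC2 x v (t := 0) (by simpa using hx)
      simpa using this
    have hden : HasDerivAt (fun t : ℝ => w (x + t • v)) d 0 := by
      have := hasDerivAt_line1 hSopen hwC2 x v (t := 0) (by simpa using hx)
      simpa using this
    have hc : HasDerivAt (fun t : ℝ => (1 / α) * w (x + t • v) ^ (1 / α - 1))
        ((1 / α) * ((1 / α - 1) * w x ^ (1 / α - 1 - 1) * d)) 0 := by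
      have hr : HasDerivAt (fun t : ℝ => w (x + t • v) ^ (1 / α - 1))
          ((1 / α - 1) * w x ^ (1 / α - 1 - 1) * d) 0 := by
        have h' := hden.rpow_const (p := 1 / α - 1) (Or.inl (by simpa using hwx.ne'))
        simp only [zero_smul, add_zero] at h'
        convert h' using 1
        ring
      exact hr.const_mul (1 / α)
    have hF4 : HasDerivAt
        (fun t : ℝ => ((1 / α) * w (x + t • v) ^ (1 / α - 1)) * fderiv ℝ w (x + t • v) v)
        ((1 / α) * ((1 / α - 1) * w x ^ (1 / α - 2) * d) * d
          + (1 / α) * w x ^ (1 / α - 1) * W2) 0 := by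
      have h' := hc.mul hnum
      have h12 : 1 / α - 1 - 1 = 1 / α - 2 := by ring
      rw [h12] at h'
      simp only [zero_smul, add_zero] at h'
      exact h'
    have heq : (fun t : ℝ => fderiv ℝ (fun z => w z ^ (1 / α)) (x + t • v) v)
        =ᶠ[nhds (0:ℝ)]
        (fun t : ℝ => ((1 / α) * w (x + t • v) ^ (1 / α - 1)) * fderiv ℝ w (x + t • v) v) := by
      filter_upwards [hDmem] with t ht
      rw [hufd _ ht]
      simp
    exact (hF3.congr_of_eventuallyEq heq.symm).unique hF4
  -- the key algebraic identity
  have hP : (0 : ℝ) < w x ^ (1 / α) := Real.rpow_pos_of_pos hwx _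
  have key : α * iteratedFDeriv ℝ 2 (fun y => Real.log (w y)) x ![v, v]
      + (⟪gradient (fun y => Real.log (w y)) x, v⟫) ^ 2
      = (α ^ 2 / w x ^ (1 / α)) * iteratedFDeriv ℝ 2 (fun z => w z ^ (1 / α)) x ![v, v] := by
    rw [hlog2, hgrad, hu2]
    have h1 : w x ^ (1 / α - 2) = w x ^ (1 / α) / w x ^ (2:ℝ) := Real.rpow_sub hwx _ _
    have h2 : w x ^ (1 / α - 1) = w x ^ (1 / α) / w x ^ (1:ℝ) := Real.rpow_sub hwx _ _
    rw [h1, h2, Real.rpow_one, Real.rpow_two]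
    field_simp
    ring
  rw [key]
  constructor
  · intro h
    exact mul_nonpos_of_nonneg_of_nonpos (by positivity) h
  · intro h
    by_contra hpos
    push_neg at hpos
    nlinarith [div_pos (by positivity : (0:ℝ) < α ^ 2) hP]
end

section
/- Let Σ ⊂ ℝⁿ be a nonempty open cone and let w : Σ → ℝ be positive, differentiable, positively homogeneous of degree α > 0, and such that w^{1/α} is concave in Σ. Set D = n + α. Then for all x, z ∈ Σ and every symmetric positive semidefinite n×n real matrix M, one has (w(z)/w(x)) · det M ≤ ( ( (∇w(x)·z)/w(x) + tr M ) / D )^D. -/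
open Set
open scoped RealInnerProductSpace

private lemma trace_eq_sum_eigs {m : ℕ} {A : Matrix (Fin m) (Fin m) ℝ} (hA : A.IsHermitian) :
    A.trace = ∑ i, hA.eigenvalues i := by
  simpa using hA.trace_eq_sum_eigenvalues

private lemma psd_det_le_pow {m : ℕ} (hm : 0 < m) {A : Matrix (Fin m) (Fin m) ℝ}
    (hA : A.PosSemidef) : A.det ≤ (A.trace / m) ^ (m : ℝ) := by
  have hev : ∀ i, 0 ≤ hA.1.eigenvalues i := hA.eigenvalues_nonneg
  have hdet : A.det = ∏ i, hA.1.eigenvalues i := by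
    simpa using hA.1.det_eq_prod_eigenvalues
  have hm' : (m : ℝ) ≠ 0 := Nat.cast_ne_zero.2 hm.ne'
  have amgm := Real.geom_mean_le_arith_mean_weighted Finset.univ (fun _ => (m : ℝ)⁻¹)
    hA.1.eigenvalues (fun i _ => by positivity)
    (by simp [Finset.card_univ, Finset.sum_const]; field_simp) (fun i _ => hev i)
  have hsum : ∑ i, (m : ℝ)⁻¹ * hA.1.eigenvalues i = A.trace / m := by
    rw [← Finset.mul_sum, ← trace_eq_sum_eigs hA.1]
    ring
  rw [hsum] at amgm
  have h2 := Real.rpow_le_rpow (Finset.prod_nonneg fun i _ => Real.rpow_nonneg (hev i) _)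
    amgm (Nat.cast_nonneg m)
  calc A.det = (∏ i, hA.1.eigenvalues i ^ ((m : ℝ)⁻¹)) ^ (m : ℝ) := by
        rw [hdet, Real.finset_prod_rpow _ _ (fun i _ => hev i),
          ← Real.rpow_mul (Finset.prod_nonneg fun i _ => hev i), inv_mul_cancel₀ hm',
          Real.rpow_one]
    _ ≤ (A.trace / m) ^ (m : ℝ) := h2

/-- The pointwise ABP estimate: if `w` is positive, differentiable, `α`-homogeneous
(`α > 0`) on a nonempty open cone `S ⊆ ℝⁿ` and `w^{1/α}` is concave in `S`, then for all
`x, z ∈ S` and every symmetric positive semidefinite matrix `M`,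
`(w(z)/w(x)) ⋅ det M ≤ ( ((∇w(x)·z)/w(x) + tr M) / D )^D`, where `D = n + α`. -/
theorem abp_pointwise_estimate {n : ℕ}
    (S : Set (EuclideanSpace ℝ (Fin n))) (hSopen : IsOpen S) (hSne : S.Nonempty)
    (hScone : ∀ x ∈ S, ∀ t : ℝ, 0 < t → t • x ∈ S)
    (α : ℝ) (hα : 0 < α)
    (w : EuclideanSpace ℝ (Fin n) → ℝ)
    (hwpos : ∀ x ∈ S, 0 < w x)
    (hwdiff : DifferentiableOn ℝ w S)
    (hwhom : ∀ t : ℝ, 0 < t → ∀ x ∈ S, w (t • x) = t ^ α * w x)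
    (hwconc : ConcaveOn ℝ S fun x => w x ^ (1 / α))
    (x : EuclideanSpace ℝ (Fin n)) (hx : x ∈ S)
    (z : EuclideanSpace ℝ (Fin n)) (hz : z ∈ S)
    (M : Matrix (Fin n) (Fin n) ℝ) (hMsym : M.IsSymm) (hM : M.PosSemidef) :
    w z / w x * M.det ≤
      ((⟪gradient w x, z⟫ / w x + M.trace) / ((n : ℝ) + α)) ^ ((n : ℝ) + α) := by
  have hwx := hwpos x hx
  have hwz := hwpos z hz
  rcases Nat.eq_zero_or_pos n with hn | hn
  · exfalso
    subst hn
    have h2 := hwhom 2 (by norm_num) x hx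
    rw [Subsingleton.elim ((2:ℝ) • x) x] at h2
    have h21 : (1:ℝ) < (2:ℝ) ^ α := by
      rw [show (1:ℝ) = (2:ℝ) ^ (0:ℝ) by simp]
      exact Real.rpow_lt_rpow_left_iff one_lt_two |>.2 hα
    nlinarith
  -- basic setup
  have hdiffx : DifferentiableAt ℝ w x := (hwdiff x hx).differentiableAt (hSopen.mem_nhds hx)
  have hcx : HasFDerivAt w (fderiv ℝ w x) x := hdiffx.hasFDerivAt
  have hinner : ∀ y, fderiv ℝ w x y = ⟪gradient w x, y⟫ := by
    intro y
    simp only [gradient]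
    exact (InnerProductSpace.toDual_symm_apply).symm
  rw [← hinner z]
  set c := fderiv ℝ w x with hc
  -- Euler's identity
  have heuler : c x = α * w x := by
    have hmap : HasDerivAt (fun t : ℝ => t • x) x 1 := by
      simpa using (hasDerivAt_id (1:ℝ)).smul_const x
    have hcx' : HasFDerivAt w c ((fun t : ℝ => t • x) 1) := by
      simpa [one_smul] using hcx
    have h1 : HasDerivAt (fun t : ℝ => w (t • x)) (c x) 1 := hcx'.comp_hasDerivAt 1 hmap
    have h2 : HasDerivAt (fun t : ℝ => t ^ α * w x) (α * w x) 1 := by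
      simpa using (Real.hasDerivAt_rpow_const (x := (1:ℝ)) (p := α)
        (Or.inl one_ne_zero)).mul_const (w x)
    have heq : (fun t : ℝ => t ^ α * w x) =ᶠ[nhds 1] (fun t : ℝ => w (t • x)) := by
      filter_upwards [isOpen_Ioi.mem_nhds (show (0:ℝ) < 1 from one_pos)] with t ht
      exact (hwhom t ht x hx).symm
    exact (h1.congr_of_eventuallyEq heq).unique h2
  -- derivative of v = w^(1/α)
  have hv : HasFDerivAt (fun y => w y ^ (1/α)) ((1/α * w x ^ (1/α - 1)) • c) x := by
    simpa using hcx.rpow_const (p := 1/α) (Or.inl hwx.ne')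
  -- support inequality
  set u := z - x with hu
  have hgline : HasDerivAt (fun t : ℝ => w (x + t • u) ^ (1/α))
      (((1/α * w x ^ (1/α - 1)) • c) u) 0 := by
    have hmap : HasDerivAt (fun t : ℝ => x + t • u) u 0 := by
      simpa using ((hasDerivAt_id (0:ℝ)).smul_const u).const_add x
    have hv' : HasFDerivAt (fun y => w y ^ (1/α)) ((1/α * w x ^ (1/α - 1)) • c)
        ((fun t : ℝ => x + t • u) 0) := by
      simpa using hv
    exact hv'.comp_hasDerivAt 0 hmap
  have hsupport : w z ^ (1/α) - w x ^ (1/α) ≤ ((1/α * w x ^ (1/α - 1)) • c) u := by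
    have htend : Filter.Tendsto (slope (fun t : ℝ => w (x + t • u) ^ (1/α)) 0)
        (nhdsWithin 0 (Set.Ioi 0)) (nhds (((1/α * w x ^ (1/α - 1)) • c) u)) :=
      (hasDerivAt_iff_tendsto_slope.mp hgline).mono_left
        (nhdsWithin_mono 0 fun t ht => ne_of_gt ht)
    refine ge_of_tendsto htend ?_
    filter_upwards [Ioc_mem_nhdsGT_of_mem
      (show (0:ℝ) ∈ Set.Ico (0:ℝ) 1 from ⟨le_refl 0, one_pos⟩)] with t ht
    have hcomb := hwconc.2 hx hz (sub_nonneg.2 ht.2) ht.1.le (by ring)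
    have hpt : (1 - t) • x + t • z = x + t • u := by
      rw [hu]; module
    rw [hpt] at hcomb
    rw [slope_def_field]
    have h0 : x + (0:ℝ) • u = x := by simp
    simp only [h0, sub_zero]
    rw [le_div_iff₀ ht.1]
    simp only [smul_eq_mul] at hcomb
    nlinarith [hcomb]
  -- simplify the support inequality
  have hpow : w x ^ (1/α - 1) * w x = w x ^ (1/α) := by
    rw [Real.rpow_sub hwx, Real.rpow_one, div_mul_cancel₀ _ hwx.ne']
  have hval : ((1/α * w x ^ (1/α - 1)) • c) u = 1/α * w x ^ (1/α - 1) * c z - w x ^ (1/α) := by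
    have h2 : ((1/α * w x ^ (1/α - 1)) • c) u = 1/α * w x ^ (1/α - 1) * (c z - c x) := by
      rw [ContinuousLinearMap.smul_apply, smul_eq_mul, hu, map_sub]
    have h3 : 1/α * w x ^ (1/α - 1) * (α * w x) = w x ^ (1/α) := by
      rw [show 1/α * w x ^ (1/α - 1) * (α * w x) = (α * (1/α)) * (w x ^ (1/α - 1) * w x) by ring,
        mul_one_div_cancel hα.ne', one_mul, hpow]
    rw [h2, heuler, mul_sub, h3]
  have key2 : w z ^ (1/α) ≤ 1/α * w x ^ (1/α - 1) * c z := by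
    rw [hval] at hsupport; linarith
  -- the quantity a
  set a : ℝ := c z / (α * w x) with hadef
  have hwxp : (0:ℝ) < w x ^ (1/α) := Real.rpow_pos_of_pos hwx _
  have ha1 : (w z / w x) ^ (1/α) ≤ a := by
    have hEq : 1/α * w x ^ (1/α - 1) * c z = w x ^ (1/α) * a := by
      rw [hadef, Real.rpow_sub hwx, Real.rpow_one]
      field_simp
    rw [Real.div_rpow hwz.le hwx.le, div_le_iff₀ hwxp]
    rw [hEq] at key2
    linarith [key2]
  have ha0 : 0 ≤ a := le_trans (Real.rpow_nonneg (div_nonneg hwz.le hwx.le) _) ha1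
  have step1 : w z / w x ≤ a ^ α := by
    have h := Real.rpow_le_rpow (Real.rpow_nonneg (div_nonneg hwz.le hwx.le) _) ha1 hα.le
    rwa [← Real.rpow_mul (div_nonneg hwz.le hwx.le), one_div, inv_mul_cancel₀ hα.ne',
      Real.rpow_one] at h
  -- matrix part
  have hdet0 : 0 ≤ M.det := by
    have hh : M.det = ∏ i, hM.1.eigenvalues i := by simpa using hM.1.det_eq_prod_eigenvalues
    rw [hh]
    exact Finset.prod_nonneg fun i _ => hM.eigenvalues_nonneg i
  have step2 : M.det ≤ (M.trace / n) ^ ((n:ℕ) : ℝ) := psd_det_le_pow hn hM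
  have htr : 0 ≤ M.trace := by
    rw [trace_eq_sum_eigs hM.1]
    exact Finset.sum_nonneg fun i _ => hM.eigenvalues_nonneg i
  set b : ℝ := M.trace / n with hbdef
  have hb0 : 0 ≤ b := div_nonneg htr (Nat.cast_nonneg n)
  have hn' : ((n:ℕ) : ℝ) ≠ 0 := Nat.cast_ne_zero.2 hn.ne'
  set D : ℝ := (n : ℝ) + α with hDdef
  have hD : 0 < D := by positivity
  have amgm2 := Real.geom_mean_le_arith_mean2_weighted (div_nonneg hα.le hD.le)
    (div_nonneg (Nat.cast_nonneg n) hD.le) ha0 hb0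
    (show α / D + (n:ℝ) / D = 1 by field_simp; ring)
  have hRHSsum : α / D * a + (n:ℝ) / D * b = (c z / w x + M.trace) / D := by
    rw [hadef, hbdef]
    field_simp
  rw [hRHSsum] at amgm2
  have final := Real.rpow_le_rpow
    (mul_nonneg (Real.rpow_nonneg ha0 _) (Real.rpow_nonneg hb0 _)) amgm2 hD.le
  rw [Real.mul_rpow (Real.rpow_nonneg ha0 _) (Real.rpow_nonneg hb0 _),
    ← Real.rpow_mul ha0, ← Real.rpow_mul hb0, div_mul_cancel₀ _ hD.ne',
    div_mul_cancel₀ _ hD.ne'] at final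
  calc w z / w x * M.det ≤ a ^ α * b ^ ((n:ℕ) : ℝ) :=
        mul_le_mul step1 step2 hdet0 (Real.rpow_nonneg ha0 _)
    _ ≤ ((c z / w x + M.trace) / D) ^ D := final
end
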